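/- Let α be a 2-cocycle on a group G with values in kˣ and set ε(g,h) := α(g,h)·α(g*h*g⁻¹, g)⁻¹. Suppose g, h, g₁, g₂ ∈ G pairwise commute. Then: (i) ε(g,e) = ε(g,g) = 1; (ii) ε(g₁*g₂, h) = ε(g₁,h)·ε(g₂,h); (iii) ε(g⁻¹, h) = ε(g,h)⁻¹; (iv) ε(g,h) = ε(h⁻¹,g) = ε(h,g)⁻¹; (v) ε(h, g₁*g₂) = ε(h,g₁)·ε(h,g₂). In particular ε restricts to a bi-character (multiplicative in each variable, with ε(g,h)·ε(h,g) = 1) on pairs of commuting elements. -/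
import Mathlib


/-- For a 2-cocycle `α : G → G → kˣ` and `ε(g,h) := α(g,h) · α(g*h*g⁻¹,g)⁻¹`,
if `g, h, g₁, g₂` pairwise commute then:
(i) `ε(g,e) = ε(g,g) = 1`; (ii) `ε(g₁*g₂,h) = ε(g₁,h)·ε(g₂,h)`; (iii) `ε(g⁻¹,h) = ε(g,h)⁻¹`;
(iv) `ε(g,h) = ε(h⁻¹,g) = ε(h,g)⁻¹`; (v) `ε(h,g₁*g₂) = ε(h,g₁)·ε(h,g₂)`.
In particular `ε` is a bi-character on commuting elements, with `ε(g,h)·ε(h,g) = 1`. -/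
theorem epsilon_bicharacter {G : Type*} [Group G] {k : Type*} [Field k]
    (α : G → G → kˣ)
    (hcoc : ∀ g h l : G, α g h * α (g * h) l = α h l * α g (h * l))
    (ε : G → G → kˣ) (hε : ∀ g h : G, ε g h = α g h * (α (g * h * g⁻¹) g)⁻¹)
    (g h g₁ g₂ : G)
    (hgh : g * h = h * g) (hgg₁ : g * g₁ = g₁ * g) (hgg₂ : g * g₂ = g₂ * g)
    (hhg₁ : h * g₁ = g₁ * h) (hhg₂ : h * g₂ = g₂ * h) (hg₁g₂ : g₁ * g₂ = g₂ * g₁) :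
    (ε g 1 = 1 ∧ ε g g = 1) ∧
    (ε (g₁ * g₂) h = ε g₁ h * ε g₂ h) ∧
    (ε g⁻¹ h = (ε g h)⁻¹) ∧
    (ε g h = ε h⁻¹ g ∧ ε g h = (ε h g)⁻¹) ∧
    (ε h (g₁ * g₂) = ε h g₁ * ε h g₂) ∧
    (ε g h * ε h g = 1) := by
  -- k-level versions
  have hk : ∀ a b c : G, (α a b : k) * α (a*b) c = α b c * α a (b*c) := by
    intro a b c
    exact_mod_cast congrArg Units.val (hcoc a b c)
  have hne : ∀ a b : G, (α a b : k) ≠ 0 := fun a b => (α a b).ne_zero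
  have hεk : ∀ a b : G, a*b = b*a → (ε a b : k) = α a b * (α b a : k)⁻¹ := by
    intro a b hab
    have hconj : a*b*a⁻¹ = b := by rw [hab]; group
    rw [hε, hconj]
    push_cast
    ring
  have h1x : ∀ x : G, (α 1 x : k) = α 1 1 := by
    intro x
    have := hk 1 1 x
    simp only [one_mul] at this
    exact mul_right_cancel₀ (hne 1 x) this.symm
  have hx1 : ∀ x : G, (α x 1 : k) = α 1 1 := by
    intro x
    have := hk x 1 1
    simp only [mul_one] at this
    exact mul_left_cancel₀ (hne x 1) (this.trans (mul_comm _ _))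
  have commInv : ∀ a b : G, a*b = b*a → a⁻¹*b = b*a⁻¹ := by
    intro a b hab
    exact (Commute.inv_left hab).eq
  -- antisymmetry (units level)
  have anti : ∀ a b : G, a*b = b*a → ε a b * ε b a = 1 := by
    intro a b hab
    apply Units.ext
    push_cast
    rw [hεk a b hab, hεk b a hab.symm]
    field_simp
  -- key multiplicativity in first argument (units level)
  have key : ∀ a b c : G, a*b = b*a → a*c = c*a → b*c = c*b →
      ε (a*b) c = ε a c * ε b c := by
    intro a b c hab hac hbc
    have habc : (a*b)*c = c*(a*b) := by
      rw [mul_assoc, hbc, ← mul_assoc, hac, mul_assoc]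
    apply Units.ext
    push_cast
    rw [hεk _ _ habc, hεk a c hac, hεk b c hbc]
    have E1 := hk a b c
    have E2 := hk a c b
    have E3 := hk c a b
    rw [hac, ← hbc] at E2
    field_simp
    apply mul_right_cancel₀ (mul_ne_zero (hne a b) (hne (c*a) b))
    linear_combination ((α c a : k) * α c b * α (c*a) b) * E1
      - ((α b c : k) * α c a * α (c*a) b) * E2
      + ((α (c*a) b : k) * α a c * α b c) * E3
  have hε1 : ∀ x : G, ε 1 x = 1 := by
    intro x
    apply Units.ext
    push_cast
    rw [hεk 1 x (by rw [one_mul, mul_one]), hx1, h1x]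
    exact mul_inv_cancel₀ (hne 1 1)
  have invkey : ∀ a b : G, a*b = b*a → ε a⁻¹ b = (ε a b)⁻¹ := by
    intro a b hab
    have h1 : ε a b * ε a⁻¹ b = 1 := by
      have := key a a⁻¹ b (by group) hab (commInv a b hab)
      rw [mul_inv_cancel, hε1] at this
      exact this.symm
    exact (inv_eq_of_mul_eq_one_right h1).symm
  refine ⟨⟨?_, ?_⟩, ?_, ?_, ⟨?_, ?_⟩, ?_, ?_⟩
  · apply Units.ext
    push_cast
    rw [hεk g 1 (by rw [mul_one, one_mul]), h1x, hx1]
    exact mul_inv_cancel₀ (hne 1 1)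
  · apply Units.ext
    push_cast
    rw [hεk g g rfl]
    exact mul_inv_cancel₀ (hne g g)
  · exact key g₁ g₂ h hg₁g₂ hhg₁.symm hhg₂.symm
  · exact invkey g h hgh
  · calc ε g h = (ε h g)⁻¹ := eq_inv_of_mul_eq_one_left (anti g h hgh)
      _ = ε h⁻¹ g := (invkey h g hgh.symm).symm
  · exact eq_inv_of_mul_eq_one_left (anti g h hgh)
  · have c1 : h * (g₁*g₂) = (g₁*g₂) * h := by
      rw [← mul_assoc, hhg₁, mul_assoc, hhg₂, ← mul_assoc]
    calc ε h (g₁*g₂) = (ε (g₁*g₂) h)⁻¹ := eq_inv_of_mul_eq_one_left (anti h (g₁*g₂) c1)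
      _ = (ε g₁ h * ε g₂ h)⁻¹ := by rw [key g₁ g₂ h hg₁g₂ hhg₁.symm hhg₂.symm]
      _ = ε h g₁ * ε h g₂ := by
          rw [mul_inv, inv_eq_of_mul_eq_one_right (anti g₁ h hhg₁.symm),
            inv_eq_of_mul_eq_one_right (anti g₂ h hhg₂.symm)]
  · exact anti g h hgh
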